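/- Suppose F = f + g − h where f is continuously differentiable with Lφ − f and lφ + f convex (L > 0, l ≥ 0, φ strongly convex continuously differentiable), g is proper lower semicontinuous convex, h is convex. Let y ∈ E, ξ ∈ ∂h(x), and let x⁺ be a minimizer of z ↦ Lφ(z) + g(z) − ⟨L∇φ(y) − ∇f(y) + ξ, z⟩ over E. Then F(x⁺) ≤ F(x) + (L + l)·D_φ(x, y) − L·D_φ(x, x⁺). -/

import Mathlib

open Filter Topology

section aux
variable {E : Type*} [NormedAddCommGroup E] [InnerProductSpace ℝ E] [CompleteSpace E]

lemma tendsto_slope_grad {φ : E → ℝ} {a G : E} (hG : HasGradientAt φ G a) (d : E) :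
    Tendsto (fun t : ℝ => (φ (a + t • d) - φ a) / t) (𝓝[>] (0:ℝ))
      (𝓝 (inner ℝ G d : ℝ)) := by
  have hline : HasDerivAt (fun t : ℝ => a + t • d) d 0 := by
    simpa using ((hasDerivAt_id (0:ℝ)).smul_const d).const_add a
  have hcomp : HasDerivAt (fun t : ℝ => φ (a + t • d)) ((inner ℝ G d : ℝ)) 0 := by
    have hfd : HasFDerivAt φ ((InnerProductSpace.toDual ℝ E) G) (a + (0:ℝ) • d) := by
      simpa using hG.hasFDerivAt
    have h2 := hfd.comp_hasDerivAt 0 hline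
    exact h2
  have hT := (hasDerivAt_iff_tendsto_slope.mp hcomp).mono_left
    (nhdsWithin_mono 0 (by intro t ht; exact ne_of_gt ht : Set.Ioi (0:ℝ) ⊆ {0}ᶜ))
  refine hT.congr' ?_
  filter_upwards [self_mem_nhdsWithin] with t ht
  simp [slope_def_field, div_eq_inv_mul]

lemma convex_grad_ineq {F : E → ℝ} (hF : ConvexOn ℝ Set.univ F) {a G : E}
    (hG : HasGradientAt F G a) (b : E) :
    F a + (inner ℝ G (b - a) : ℝ) ≤ F b := by
  have hT := tendsto_slope_grad hG (b - a)
  have hev : ∀ᶠ t : ℝ in 𝓝[>] 0, (F (a + t • (b - a)) - F a) / t ≤ F b - F a := by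
    filter_upwards [Ioo_mem_nhdsGT_of_mem (by norm_num : (0:ℝ) ∈ Set.Ico 0 1)]
      with t ht
    have key : F (a + t • (b - a)) ≤ (1 - t) * F a + t * F b := by
      have := hF.2 (Set.mem_univ a) (Set.mem_univ b)
        (by linarith [ht.2] : (0:ℝ) ≤ 1 - t) (le_of_lt ht.1) (by ring)
      have heq : (1 - t) • a + t • b = a + t • (b - a) := by module
      rw [heq] at this
      simpa using this
    rw [div_le_iff₀ ht.1]
    nlinarith [ht.1]
  have := le_of_tendsto hT hev
  linarith

lemma combo_gradient_sub {φ f : E → ℝ} {c : ℝ} {y : E} (hφ : DifferentiableAt ℝ φ y)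
    (hf : DifferentiableAt ℝ f y) :
    HasGradientAt (fun z => c * φ z - f z) (c • gradient φ y - gradient f y) y := by
  rw [hasGradientAt_iff_hasFDerivAt]
  have h1 := (hφ.hasGradientAt.hasFDerivAt.const_mul c).sub hf.hasGradientAt.hasFDerivAt
  refine h1.congr_fderiv ?_
  simp [map_sub, map_add]

lemma combo_gradient_add {φ f : E → ℝ} {c : ℝ} {y : E} (hφ : DifferentiableAt ℝ φ y)
    (hf : DifferentiableAt ℝ f y) :
    HasGradientAt (fun z => c * φ z + f z) (c • gradient φ y + gradient f y) y := by
  rw [hasGradientAt_iff_hasFDerivAt]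
  have h1 := (hφ.hasGradientAt.hasFDerivAt.const_mul c).add hf.hasGradientAt.hasFDerivAt
  refine h1.congr_fderiv ?_
  simp [map_sub, map_add]

end aux

/-- Bregman distance associated with `φ`. -/
noncomputable def Dphi {E : Type*} [NormedAddCommGroup E] [InnerProductSpace ℝ E]
    [CompleteSpace E] (φ : E → ℝ) (x y : E) : ℝ :=
  φ x - φ y - (inner ℝ (gradient φ y) (x - y) : ℝ)

/-- Convex subdifferential of `h` at `x`. -/
def ConvexSubdiff {E : Type*} [NormedAddCommGroup E] [InnerProductSpace ℝ E]
    (h : E → ℝ) (x : E) : Set E :=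
  {ξ | ∀ z, h x + (inner ℝ ξ (z - x) : ℝ) ≤ h z}

theorem stmt3 {E : Type*} [NormedAddCommGroup E] [InnerProductSpace ℝ E]
    [FiniteDimensional ℝ E]
    (f g h φ : E → ℝ) (L l ρ : ℝ) (hL : 0 < L) (hl : 0 ≤ l) (hρ : 0 < ρ)
    (hf : ContDiff ℝ 1 f) (hφ : ContDiff ℝ 1 φ)
    (hφsc : ConvexOn ℝ Set.univ (fun x => φ x - ρ / 2 * ‖x‖ ^ 2))
    (hLf : ConvexOn ℝ Set.univ (fun x => L * φ x - f x))
    (hlf : ConvexOn ℝ Set.univ (fun x => l * φ x + f x))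
    (hg : ConvexOn ℝ Set.univ g) (hglsc : LowerSemicontinuous g)
    (hh : ConvexOn ℝ Set.univ h)
    (x y xplus ξ : E) (hξ : ξ ∈ ConvexSubdiff h x)
    (hmin : ∀ z : E,
      L * φ xplus + g xplus
          - (inner ℝ (L • gradient φ y - gradient f y + ξ) xplus : ℝ)
        ≤ L * φ z + g z - (inner ℝ (L • gradient φ y - gradient f y + ξ) z : ℝ)) :
    f xplus + g xplus - h xplus
      ≤ (f x + g x - h x) + (L + l) * Dphi φ x y - L * Dphi φ x xplus := by
  have hφd : Differentiable ℝ φ := hφ.differentiable (by norm_num)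
  have hfd : Differentiable ℝ f := hf.differentiable (by norm_num)
  -- descent-type inequality for f at y via convexity of Lφ - f
  have ineq1 := convex_grad_ineq hLf (combo_gradient_sub (hφd y) (hfd y)) xplus
  -- lower bound via convexity of lφ + f
  have ineq2 := convex_grad_ineq hlf (combo_gradient_add (hφd y) (hfd y)) x
  have ineq3 := hξ xplus
  -- three-point inequality from the minimization property
  have key : (inner ℝ (L • gradient φ y - gradient f y + ξ) (x - xplus) : ℝ)
      - g x + g xplus ≤ L * (inner ℝ (gradient φ xplus) (x - xplus) : ℝ) := by
    have hTp := (tendsto_slope_grad (hφd xplus).hasGradientAt (x - xplus)).const_mul L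
    refine ge_of_tendsto hTp ?_
    filter_upwards [Ioo_mem_nhdsGT_of_mem (by norm_num : (0:ℝ) ∈ Set.Ico 0 1)]
      with t ht
    have hm := hmin (xplus + t • (x - xplus))
    have hgc : g (xplus + t • (x - xplus)) ≤ (1 - t) * g xplus + t * g x := by
      have := hg.2 (Set.mem_univ xplus) (Set.mem_univ x)
        (by linarith [ht.2] : (0:ℝ) ≤ 1 - t) (le_of_lt ht.1) (by ring)
      have heq : (1 - t) • xplus + t • x = xplus + t • (x - xplus) := by module
      rw [heq] at this
      simpa using this
    have hv : (inner ℝ (L • gradient φ y - gradient f y + ξ) (xplus + t • (x - xplus)) : ℝ)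
        = (inner ℝ (L • gradient φ y - gradient f y + ξ) xplus : ℝ)
          + t * (inner ℝ (L • gradient φ y - gradient f y + ξ) (x - xplus) : ℝ) := by
      rw [inner_add_right, real_inner_smul_right]
    rw [mul_div_assoc', le_div_iff₀ ht.1]
    nlinarith [ht.1]
  simp only [Dphi, inner_sub_left, inner_add_left, inner_sub_right,
    real_inner_smul_left] at ineq1 ineq2 ineq3 key ⊢
  linarith
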